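/- Let ℓ ≥ 5 and n ≥ ℓ. The sequence π = (n−1, (ℓ−2)^{ℓ−2}, 1^{n−ℓ+1}), consisting of one term n−1, ℓ−2 terms equal to ℓ−2, and n−ℓ+1 terms equal to 1, is graphic but not potentially C_ℓ-graphic; consequently σ(C_ℓ, n) ≥ σ(π) + 2 = 2n + ℓ² − 5ℓ + 6. -/

import Mathlib

/-- `G` contains a cycle of length `r`. -/
def hasCycleOfLength {V : Type*} (G : SimpleGraph V) (r : ℕ) : Prop :=
  ∃ (v : V) (c : G.Walk v v), c.IsCycle ∧ c.length = r

/-- `G` is a realization of the sequence `d`, i.e. `d` is its degree sequence. -/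
def IsDegreeSeq {n : ℕ} (G : SimpleGraph (Fin n)) (d : Fin n → ℕ) : Prop :=
  ∀ i, (G.neighborSet i).ncard = d i

/-- The sequence `d` is graphic: it is the degree sequence of a simple graph. -/
def Graphic {n : ℕ} (d : Fin n → ℕ) : Prop :=
  ∃ G : SimpleGraph (Fin n), IsDegreeSeq G d

/-- `d` is potentially ₃Cℓ-graphic: some realization contains cycles of every
length `r` with `3 ≤ r ≤ ℓ`. -/
def Pot3C {n : ℕ} (ℓ : ℕ) (d : Fin n → ℕ) : Prop :=
  ∃ G : SimpleGraph (Fin n), IsDegreeSeq G d ∧ ∀ r, 3 ≤ r → r ≤ ℓ → hasCycleOfLength G r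

/-- `d` is potentially Cℓ-graphic: some realization contains a cycle of length `ℓ`. -/
def PotC {n : ℕ} (ℓ : ℕ) (d : Fin n → ℕ) : Prop :=
  ∃ G : SimpleGraph (Fin n), IsDegreeSeq G d ∧ hasCycleOfLength G ℓ

/-- `d` has a realization `G` containing cycles `C₃, …, C_ℓ` on those vertices with
degrees `d 0, …, d (ℓ-1)`: the induced subgraph on some vertex set `S`, whose multiset
of degrees is that of the first `ℓ` terms of `d`, contains cycles of all lengths
from `3` to `ℓ`. -/
def RealizationWithCyclesOn {n : ℕ} (ℓ : ℕ) (d : Fin n → ℕ) : Prop :=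
  ∃ (G : SimpleGraph (Fin n)) (S : Finset (Fin n)),
    IsDegreeSeq G d ∧ S.card = ℓ ∧
    S.val.map d = (Finset.univ.filter (fun i : Fin n => (i : ℕ) < ℓ)).val.map d ∧
    ∀ r, 3 ≤ r → r ≤ ℓ → hasCycleOfLength (G.induce (S : Set (Fin n))) r

/-- The sequence `(n-1, (ℓ-2)^{ℓ-2}, 1^{n-ℓ+1})`. -/
def seqLB (ℓ n : ℕ) : Fin n → ℕ := fun j =>
  if (j : ℕ) = 0 then n - 1
  else if (j : ℕ) ≤ ℓ - 2 then ℓ - 2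
  else 1

open SimpleGraph Finset

section Aux

/-- The first edge of a non-nil walk is among its edges. -/
lemma first_edge_mem_aux {V : Type*} {G : SimpleGraph V} {u v : V} (w : G.Walk u v)
    (hw : ¬ w.Nil) : s(u, w.getVert 1) ∈ w.edges := by
  cases w with
  | nil => simp at hw
  | cons h q => simp [Walk.edges_cons, Walk.getVert_cons_succ, Walk.getVert_zero]

/-- The base vertex of a cycle has two distinct neighbors. -/
lemma two_neighbors_of_cycle_aux {V : Type*} {G : SimpleGraph V} {u : V} {p : G.Walk u u}
    (hp : p.IsCycle) : ∃ a b, a ≠ b ∧ G.Adj u a ∧ G.Adj u b := by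
  have h3 := hp.three_le_length
  cases p with
  | nil => exact absurd rfl hp.ne_nil
  | @cons _ x _ h q =>
    rw [Walk.cons_isCycle_iff] at hp
    obtain ⟨hq, he⟩ := hp
    have hrnil : ¬ q.reverse.Nil := by
      rw [Walk.not_nil_iff_lt_length, Walk.length_reverse]
      simp only [Walk.length_cons] at h3; omega
    have hadj : G.Adj u (q.reverse.getVert 1) := q.reverse.adj_snd hrnil
    have hmem : s(u, q.reverse.getVert 1) ∈ q.edges := by
      have := first_edge_mem_aux q.reverse hrnil
      rwa [Walk.edges_reverse, List.mem_reverse] at this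
    refine ⟨x, q.reverse.getVert 1, ?_, h, hadj⟩
    intro hxy
    rw [← hxy] at hmem
    exact he hmem

/-- Every vertex on a cycle has two distinct neighbors. -/
lemma two_neighbors_of_mem_cycle_aux {V : Type*} [DecidableEq V] {G : SimpleGraph V} {v : V}
    {c : G.Walk v v} (hc : c.IsCycle) {w : V} (hw : w ∈ c.support) :
    ∃ a b, a ≠ b ∧ G.Adj w a ∧ G.Adj w b :=
  two_neighbors_of_cycle_aux (hc.rotate hw)

lemma card_filter_val_lt_aux (n k : ℕ) (hk : k ≤ n) :
    (Finset.univ.filter (fun j : Fin n => (j : ℕ) < k)).card = k := by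
  rw [← Fintype.card_subtype]
  exact Fintype.card_fin_lt_of_le hk

/-- The realization of `seqLB`: vertex 0 joined to everything, and vertices
`1, …, ℓ-2` pairwise joined. -/
def GlbAux (ℓ n : ℕ) : SimpleGraph (Fin n) where
  Adj i j := i ≠ j ∧ ((i : ℕ) = 0 ∨ (j : ℕ) = 0 ∨ ((i : ℕ) ≤ ℓ - 2 ∧ (j : ℕ) ≤ ℓ - 2))
  symm := ⟨by intro i j ⟨h1, h2⟩; exact ⟨h1.symm, by tauto⟩⟩
  loopless := ⟨fun i h => h.1 rfl⟩

instance (ℓ n : ℕ) : DecidableRel (GlbAux ℓ n).Adj := fun i j =>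
  inferInstanceAs (Decidable (i ≠ j ∧ ((i : ℕ) = 0 ∨ (j : ℕ) = 0 ∨
    ((i : ℕ) ≤ ℓ - 2 ∧ (j : ℕ) ≤ ℓ - 2))))

lemma GlbAux_deg (ℓ n : ℕ) (hl : 5 ≤ ℓ) (hn : ℓ ≤ n) (i : Fin n) :
    ((GlbAux ℓ n).neighborSet i).ncard = seqLB ℓ n i := by
  rw [Set.ncard_eq_toFinset_card', ← neighborFinset_def, neighborFinset_eq_filter]
  simp only [seqLB]
  by_cases h0 : (i : ℕ) = 0
  · rw [if_pos h0]
    have : Finset.univ.filter ((GlbAux ℓ n).Adj i) = Finset.univ.erase i := by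
      ext j
      simp only [mem_filter, mem_univ, true_and, mem_erase]
      constructor
      · rintro ⟨h1, -⟩; exact ⟨Ne.symm h1, trivial⟩
      · rintro ⟨h1, -⟩; exact ⟨Ne.symm h1, Or.inl h0⟩
    rw [this, Finset.card_erase_of_mem (mem_univ i), Finset.card_univ, Fintype.card_fin]
  · rw [if_neg h0]
    by_cases hm : (i : ℕ) ≤ ℓ - 2
    · rw [if_pos hm]
      have : Finset.univ.filter ((GlbAux ℓ n).Adj i) =
          (Finset.univ.filter (fun j : Fin n => (j : ℕ) < ℓ - 1)).erase i := by
        ext j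
        simp only [mem_filter, mem_univ, true_and, mem_erase]
        constructor
        · rintro ⟨h1, h2⟩
          refine ⟨Ne.symm h1, ?_⟩
          rcases h2 with h | h | h <;> omega
        · rintro ⟨h1, h2⟩
          exact ⟨Ne.symm h1, Or.inr (Or.inr ⟨hm, by omega⟩)⟩
      rw [this, Finset.card_erase_of_mem (by simp only [mem_filter, mem_univ, true_and]; omega),
        card_filter_val_lt_aux n (ℓ - 1) (by omega)]
      omega
    · rw [if_neg hm]
      have hn0 : 0 < n := by omega
      have : Finset.univ.filter ((GlbAux ℓ n).Adj i) = {(⟨0, hn0⟩ : Fin n)} := by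
        ext j
        simp only [mem_filter, mem_univ, true_and, mem_singleton]
        constructor
        · rintro ⟨h1, h2⟩
          have : (j : ℕ) = 0 := by rcases h2 with h | h | h <;> omega
          exact Fin.ext this
        · rintro rfl
          refine ⟨?_, Or.inr (Or.inl rfl)⟩
          intro hij
          have hv : (i : ℕ) = 0 := by rw [hij]
          exact h0 hv
      rw [this, Finset.card_singleton]

lemma sum_seqLB_aux (ℓ n : ℕ) (hl : 5 ≤ ℓ) (hn : ℓ ≤ n) :
    ∑ i : Fin n, seqLB ℓ n i = (n - 1) + (ℓ - 2) * (ℓ - 2) + (n - (ℓ - 1)) := by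
  have h1 : ∑ i : Fin n, seqLB ℓ n i =
      ∑ i ∈ Finset.range n, (if i = 0 then n - 1 else if i ≤ ℓ - 2 then ℓ - 2 else 1) := by
    simp only [seqLB]
    exact Fin.sum_univ_eq_sum_range
      (fun m => if m = 0 then n - 1 else if m ≤ ℓ - 2 then ℓ - 2 else 1) n
  rw [h1, Finset.range_eq_Ico]
  rw [← Finset.sum_Ico_consecutive _ (by omega : 0 ≤ ℓ - 1) (by omega : ℓ - 1 ≤ n)]
  rw [← Finset.sum_Ico_consecutive _ (by omega : 0 ≤ 1) (by omega : 1 ≤ ℓ - 1)]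
  have e1 : ∑ i ∈ Finset.Ico 0 1, (if i = 0 then n - 1 else if i ≤ ℓ - 2 then ℓ - 2 else 1)
      = n - 1 := by simp
  have e2 : ∑ i ∈ Finset.Ico 1 (ℓ - 1),
      (if i = 0 then n - 1 else if i ≤ ℓ - 2 then ℓ - 2 else 1) = (ℓ - 2) * (ℓ - 2) := by
    have hc : ∀ i ∈ Finset.Ico 1 (ℓ - 1),
        (if i = 0 then n - 1 else if i ≤ ℓ - 2 then ℓ - 2 else 1) = ℓ - 2 := by
      intro i hi
      rw [Finset.mem_Ico] at hi
      rw [if_neg (by omega), if_pos (by omega)]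
    rw [Finset.sum_congr rfl hc, Finset.sum_const, Nat.card_Ico, smul_eq_mul,
      show ℓ - 1 - 1 = ℓ - 2 from by omega]
  have e3 : ∑ i ∈ Finset.Ico (ℓ - 1) n,
      (if i = 0 then n - 1 else if i ≤ ℓ - 2 then ℓ - 2 else 1) = n - (ℓ - 1) := by
    have hc : ∀ i ∈ Finset.Ico (ℓ - 1) n,
        (if i = 0 then n - 1 else if i ≤ ℓ - 2 then ℓ - 2 else 1) = 1 := by
      intro i hi
      rw [Finset.mem_Ico] at hi
      rw [if_neg (by omega), if_neg (by omega)]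
    rw [Finset.sum_congr rfl hc, Finset.sum_const, Nat.card_Ico, smul_eq_mul, mul_one]
  rw [e1, e2, e3]

end Aux

theorem sigma_C_lower (ℓ n : ℕ) (hl : 5 ≤ ℓ) (hn : ℓ ≤ n) :
    Graphic (seqLB ℓ n) ∧
    ¬ PotC ℓ (seqLB ℓ n) ∧
    (∀ s : ℕ, Even s →
      (∀ e : Fin n → ℕ, Antitone e → Graphic e → s ≤ ∑ i, e i → PotC ℓ e) →
      2 * n + ℓ ^ 2 - 5 * ℓ + 6 ≤ s) := by
  have hGraphic : Graphic (seqLB ℓ n) := ⟨GlbAux ℓ n, fun i => GlbAux_deg ℓ n hl hn i⟩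
  have hNot : ¬ PotC ℓ (seqLB ℓ n) := by
    rintro ⟨G, hdeg, v, c, hc, hlen⟩
    have hT : (c.support.tail.toFinset).card = ℓ := by
      rw [List.toFinset_card_of_nodup hc.support_nodup, List.length_tail,
        Walk.length_support, hlen]
      omega
    have hsub : c.support.tail.toFinset ⊆
        Finset.univ.filter (fun j : Fin n => (j : ℕ) < ℓ - 1) := by
      intro u hu
      rw [List.mem_toFinset] at hu
      have hu' : u ∈ c.support := List.mem_of_mem_tail hu
      obtain ⟨a, b, hab, ha, hb⟩ := two_neighbors_of_mem_cycle_aux hc hu'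
      have h2 : 1 < (G.neighborSet u).ncard :=
        (Set.one_lt_ncard (Set.toFinite _)).mpr ⟨a, ha, b, hb, hab⟩
      rw [hdeg u] at h2
      simp only [seqLB] at h2
      rw [mem_filter]
      refine ⟨mem_univ u, ?_⟩
      by_contra hge
      rw [if_neg (by omega), if_neg (by omega)] at h2
      omega
    have hcard := Finset.card_le_card hsub
    rw [hT, card_filter_val_lt_aux n (ℓ - 1) (by omega)] at hcard
    omega
  refine ⟨hGraphic, hNot, ?_⟩
  intro s hs hall
  have hanti : Antitone (seqLB ℓ n) := by
    intro i j hij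
    have hij' : (i : ℕ) ≤ (j : ℕ) := hij
    simp only [seqLB]
    split_ifs <;> omega
  have hgt : ∑ i, seqLB ℓ n i < s := by
    by_contra hle
    exact hNot (hall _ hanti hGraphic (by omega))
  rw [sum_seqLB_aux ℓ n hl hn] at hgt
  obtain ⟨a, ha⟩ := hs
  set m := ℓ - 2 with hm
  have hm2 : ℓ = m + 2 := by omega
  have hsq : ℓ ^ 2 = m * m + 4 * m + 4 := by rw [hm2]; ring
  have heven : (m * m + m) % 2 = 0 := by
    have h1 := Nat.even_mul_succ_self m
    rw [Nat.even_iff] at h1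
    have h2 : m * (m + 1) = m * m + m := by ring
    omega
  rw [hsq]
  generalize hq : m * m = q at *
  omega
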